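/- arXiv:2501.18014 — 2 statements merged into one kernel-verified Lean document; each statement's English description precedes it below -/
import Mathlib

section
/- If Q*(word) = Tr of the composition as above, then the scalar probabilities satisfy the shift formula: for a quantum state ρ and E a cylinder event determined by coordinates n+1,…,n+m, Q_ρ(σ^{-n}(E)) = Q_{Φ^{(n)}(ρ)}'(E), where σ is the left shift, Q_ρ is the probability measure on 𝒜^ℕ with cylinder probabilities Tr(V_n(ā) ρ V_n(ā)†), and Q' is the corresponding measure built from the ensembles shifted by n with initial state Φ^{(n)}(ρ). -/
open Matrix MeasureTheory
open scoped ComplexOrder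

/-- Cylinder set of sequences whose first n coordinates equal a given word. -/
def cyl {𝒜 : Type*} (n : ℕ) (w : Fin n → 𝒜) : Set (ℕ → 𝒜) :=
  {x | ∀ i : Fin n, x i = w i}

/-- V_n(a_1,…,a_n) = v_{a_n,n} ⋯ v_{a_1,1} (times indexed from 0 here). -/
noncomputable def Vw {d : ℕ} {𝒜 : Type*} (v : ℕ → 𝒜 → Matrix (Fin d) (Fin d) ℂ) :
    (n : ℕ) → (Fin n → 𝒜) → Matrix (Fin d) (Fin d) ℂ
  | 0, _ => 1
  | n + 1, w => v n (w (Fin.last n)) * Vw v n (fun i => w i.castSucc)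

/-- Φ^{(n)} = φ_n ∘ ⋯ ∘ φ_1 where φ_k(M) = Σ_a v_{a,k} M v_{a,k}†. -/
noncomputable def Phi {d : ℕ} {𝒜 : Type*} [Fintype 𝒜]
    (v : ℕ → 𝒜 → Matrix (Fin d) (Fin d) ℂ) :
    ℕ → Matrix (Fin d) (Fin d) ℂ → Matrix (Fin d) (Fin d) ℂ
  | 0, M => M
  | n + 1, M => ∑ a, v n a * Phi v n M * (v n a)ᴴ

set_option linter.unusedSectionVars false
section Aux
variable {d : ℕ} {𝒜 : Type*}

lemma Vw_succ (v : ℕ → 𝒜 → Matrix (Fin d) (Fin d) ℂ) (n : ℕ) (w : Fin (n+1) → 𝒜) :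
    Vw v (n+1) w = v n (w (Fin.last n)) * Vw v n (fun i => w i.castSucc) := rfl

lemma Vw_split (v : ℕ → 𝒜 → Matrix (Fin d) (Fin d) ℂ) (n : ℕ) :
    ∀ (k : ℕ) (w : Fin (n + k) → 𝒜),
    Vw v (n + k) w
      = Vw (fun j => v (j + n)) k (fun i => w (Fin.natAdd n i))
        * Vw v n (fun i => w (Fin.castAdd k i))
  | 0, w => by
    rw [show Vw (fun j => v (j + n)) 0 _ = 1 from rfl, one_mul]
    rfl
  | k + 1, w => by
    have IH := Vw_split v n k (fun i => w i.castSucc)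
    calc Vw v (n + (k+1)) w
        = v (n+k) (w (Fin.last (n+k))) * Vw v (n+k) (fun i => w i.castSucc) := rfl
      _ = v (n+k) (w (Fin.last (n+k)))
            * ((Vw (fun j => v (j + n)) k fun i => w (Fin.natAdd n i).castSucc)
              * Vw v n fun i => w (Fin.castAdd k i).castSucc) := by rw [IH]
      _ = (v (k+n) (w (Fin.last (n+k)))
            * Vw (fun j => v (j + n)) k fun i => w (Fin.natAdd n i).castSucc)
            * Vw v n fun i => w (Fin.castAdd k i).castSucc := by
          rw [Nat.add_comm k n, mul_assoc]
      _ = _ := rfl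

lemma sum_Vw_eq_Phi [Fintype 𝒜] (v : ℕ → 𝒜 → Matrix (Fin d) (Fin d) ℂ)
    (M : Matrix (Fin d) (Fin d) ℂ) :
    ∀ n : ℕ, ∑ u : Fin n → 𝒜, Vw v n u * M * (Vw v n u)ᴴ = Phi v n M
  | 0 => by
    simp [Vw, Phi, Matrix.conjTranspose_one]
  | n + 1 => by
    rw [show Phi v (n+1) M = ∑ a, v n a * Phi v n M * (v n a)ᴴ from rfl,
      ← (Fin.snocEquiv (fun _ => 𝒜)).sum_comp (fun u => Vw v (n+1) u * M * (Vw v (n+1) u)ᴴ)]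
    rw [Fintype.sum_prod_type]
    refine Finset.sum_congr rfl fun a _ => ?_
    rw [← sum_Vw_eq_Phi v M n, Finset.mul_sum, Finset.sum_mul]
    refine Finset.sum_congr rfl fun u _ => ?_
    have h1 : Vw v (n+1) (Fin.snocEquiv (fun _ => 𝒜) (a, u)) = v n a * Vw v n u := by
      rw [Vw_succ]
      simp [Fin.snocEquiv, Fin.snoc_last, Fin.snoc_castSucc]
    rw [h1, conjTranspose_mul]
    noncomm_ring

variable [MeasurableSpace 𝒜] [MeasurableSingletonClass 𝒜]

lemma measurableSet_cyl (k : ℕ) (w : Fin k → 𝒜) : MeasurableSet (cyl k w) := by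
  have h : cyl k w = ⋂ i : Fin k, (fun x : ℕ → 𝒜 => x i) ⁻¹' {w i} := by
    ext x; simp [cyl]
  rw [h]
  exact MeasurableSet.iInter fun i => (measurable_pi_apply _) (measurableSet_singleton _)

lemma pairwise_disjoint_cyl (k : ℕ) :
    Pairwise (Function.onFun Disjoint fun w : Fin k → 𝒜 => cyl k w) := by
  intro w w' hne
  rw [Function.onFun, Set.disjoint_left]
  rintro x hx hx'
  exact hne (funext fun i => (hx i).symm.trans (hx' i))

lemma shift_preimage_cyl (n k : ℕ) (w : Fin k → 𝒜) :
    (fun x (j : ℕ) => x (j + n)) ⁻¹' cyl k w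
      = ⋃ u : Fin n → 𝒜, cyl (n + k) (Fin.append u w) := by
  ext x
  simp only [Set.mem_preimage, Set.mem_iUnion, cyl, Set.mem_setOf_eq]
  constructor
  · intro h
    refine ⟨fun i : Fin n => x i.1, fun i => ?_⟩
    refine Fin.addCases (fun i => ?_) (fun i => ?_) i
    · rw [Fin.append_left]
      rfl
    · rw [Fin.append_right]
      rw [← h i]
      simp [Nat.add_comm]
  · rintro ⟨u, h⟩ i
    have := h (Fin.natAdd n i)
    rw [Fin.append_right] at this
    rw [← this]
    simp [Nat.add_comm]

lemma measure_prefix [Fintype 𝒜] (m : Measure (ℕ → 𝒜))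
    (k : ℕ) (S : Set (Fin k → 𝒜)) :
    m {x | (fun i : Fin k => x i) ∈ S} = ∑' w : S, m (cyl k (w : Fin k → 𝒜)) := by
  have h : {x : ℕ → 𝒜 | (fun i : Fin k => x i) ∈ S} = ⋃ w ∈ S, cyl k w := by
    ext x
    simp only [Set.mem_setOf_eq, Set.mem_iUnion, cyl]
    constructor
    · intro h; exact ⟨_, h, fun i => rfl⟩
    · rintro ⟨g, hg, h⟩
      have hx : (fun i : Fin k => x i) = g := funext h
      rwa [hx]
  rw [h, measure_biUnion S.to_countable (fun w _ w' _ hne => pairwise_disjoint_cyl k hne)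
    (fun w _ => measurableSet_cyl k w)]

lemma trace_re_nonneg {A : Matrix (Fin d) (Fin d) ℂ} (hA : A.PosSemidef) :
    0 ≤ A.trace.re := by
  have h : (0:ℂ) ≤ A.trace := by
    rw [Matrix.trace]
    apply Finset.sum_nonneg
    intro i _
    exact hA.diag_nonneg
  exact (Complex.nonneg_iff.mp h).1

end Aux

/-- Shift formula for the scalar probabilities: Q_ρ(σ^{-n}(E)) = Q'_{Φ^{(n)}(ρ)}(E),
where Q' is built from the ensemble shifted by n and initial state Φ^{(n)}(ρ). -/
theorem stmt8 {d : ℕ} {𝒜 : Type*} [Fintype 𝒜] [MeasurableSpace 𝒜]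
    [MeasurableSingletonClass 𝒜]
    (v : ℕ → 𝒜 → Matrix (Fin d) (Fin d) ℂ)
    (hv : ∀ k, ∑ a, (v k a)ᴴ * v k a = 1)
    (ρ : Matrix (Fin d) (Fin d) ℂ) (hρ : ρ.PosSemidef) (htr : ρ.trace = 1)
    (n : ℕ)
    (μ μ' : Measure (ℕ → 𝒜)) [IsProbabilityMeasure μ] [IsProbabilityMeasure μ']
    (hμ : ∀ k (w : Fin k → 𝒜),
      μ (cyl k w)
        = ENNReal.ofReal (Matrix.trace (Vw v k w * ρ * (Vw v k w)ᴴ)).re)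
    (hμ' : ∀ k (w : Fin k → 𝒜),
      μ' (cyl k w)
        = ENNReal.ofReal (Matrix.trace
            (Vw (fun j => v (j + n)) k w * Phi v n ρ
              * (Vw (fun j => v (j + n)) k w)ᴴ)).re) :
    ∀ E : Set (ℕ → 𝒜), MeasurableSet E →
      μ ((fun x (k : ℕ) => x (k + n)) ⁻¹' E) = μ' E := by
  classical
  intro E hE
  have hfmeas : Measurable (fun x (k : ℕ) => x (k + n) : (ℕ → 𝒜) → (ℕ → 𝒜)) :=
    measurable_pi_lambda _ fun k => measurable_pi_apply _
  set ν := μ.map (fun x (k : ℕ) => x (k + n)) with hν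
  have hmap : ∀ s : Set (ℕ → 𝒜), MeasurableSet s →
      ν s = μ ((fun x (k : ℕ) => x (k + n)) ⁻¹' s) :=
    fun s hs => Measure.map_apply hfmeas hs
  have hprob : IsProbabilityMeasure ν := Measure.isProbabilityMeasure_map hfmeas.aemeasurable
  -- equality on prefix cylinders
  have hcyl : ∀ k (w : Fin k → 𝒜), ν (cyl k w) = μ' (cyl k w) := by
    intro k w
    have hdisj : Pairwise (Function.onFun Disjoint
        fun u : Fin n → 𝒜 => cyl (n + k) (Fin.append u w)) := by
      intro u u' hne
      refine pairwise_disjoint_cyl (n + k) (fun heq => hne ?_)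
      funext i
      have h := congrFun heq (Fin.castAdd k i)
      rwa [Fin.append_left, Fin.append_left] at h
    rw [hmap _ (measurableSet_cyl k w), shift_preimage_cyl,
      measure_iUnion hdisj (fun u => measurableSet_cyl _ _), tsum_fintype]
    simp_rw [hμ]
    rw [← ENNReal.ofReal_sum_of_nonneg
      (fun u _ => trace_re_nonneg (hρ.mul_mul_conjTranspose_same _)), hμ']
    congr 1
    have hsplit : ∀ u : Fin n → 𝒜, Vw v (n + k) (Fin.append u w)
        = Vw (fun j => v (j + n)) k w * Vw v n u := by
      intro u
      have h1 : (fun i : Fin k => Fin.append u w (Fin.natAdd n i)) = w :=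
        funext fun i => Fin.append_right u w i
      have h2 : (fun i : Fin n => Fin.append u w (Fin.castAdd k i)) = u :=
        funext fun i => Fin.append_left u w i
      rw [Vw_split v n k (Fin.append u w), h1, h2]
    have hmat : ∑ u : Fin n → 𝒜,
        Vw v (n + k) (Fin.append u w) * ρ * (Vw v (n + k) (Fin.append u w))ᴴ
        = Vw (fun j => v (j + n)) k w * Phi v n ρ * (Vw (fun j => v (j + n)) k w)ᴴ := by
      simp_rw [hsplit, conjTranspose_mul]
      rw [← sum_Vw_eq_Phi v ρ n, Finset.mul_sum, Finset.sum_mul]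
      exact Finset.sum_congr rfl fun u _ => by noncomm_ring
    rw [← hmat, Matrix.trace_sum, Complex.re_sum]
  -- extend to all measurable sets via π-system
  have hext : ν = μ' := by
    refine ext_of_generate_finite (measurableCylinders fun _ : ℕ => 𝒜)
      (generateFrom_measurableCylinders).symm isPiSystem_measurableCylinders ?_ ?_
    · intro t ht
      obtain ⟨I, S, hS, rfl⟩ := (mem_measurableCylinders t).mp ht
      set k := I.sup id + 1 with hk
      have hik : ∀ i ∈ I, i < k := fun i hi => Nat.lt_succ_of_le (Finset.le_sup (f := id) hi)
      set S' : Set (Fin k → 𝒜) := {g | (fun i : I => g ⟨i.1, hik i.1 i.2⟩) ∈ S} with hS'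
      have hc : cylinder I S = {x : ℕ → 𝒜 | (fun i : Fin k => x i) ∈ S'} := rfl
      rw [hc, measure_prefix ν k S', measure_prefix μ' k S']
      exact tsum_congr fun w => hcyl k w
    · simp [measure_univ]
  rw [← hext, hmap E hE]
end

section
/- For any word (a_1,…,a_n) and any measurable S ⊆ 𝒜^ℕ, the matrix measure satisfies Q*_ω(σ^{-n}(S) ∩ π_n⁻¹{(a_1,…,a_n)}) = T†_{a_1;θ(ω)} ∘ ⋯ ∘ T†_{a_n;θⁿ(ω)}(Q*_{θⁿ(ω)}(S)) for ℙ-a.e. ω. -/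
open MeasureTheory Matrix Filter
open scoped ComplexOrder ENNReal

/-- V_{n;ω}(a_1,…,a_n) = v_{a_n; θⁿ(ω)} ⋯ v_{a_1; θ(ω)}. -/
noncomputable def Vq {Ω 𝒜 : Type*} {d : ℕ} (v : Ω → 𝒜 → Matrix (Fin d) (Fin d) ℂ)
    (θ : Ω → Ω) (ω : Ω) : (n : ℕ) → (Fin n → 𝒜) → Matrix (Fin d) (Fin d) ℂ
  | 0, _ => 1
  | n + 1, w => v (θ^[n + 1] ω) (w (Fin.last n)) * Vq v θ ω n (fun i => w i.castSucc)

/-- The left shift σ on 𝒜^ℕ. -/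
def shiftSeq {𝒜 : Type*} (x : ℕ → 𝒜) : ℕ → 𝒜 := fun k => x (k + 1)

/-- The skew shift τ(ω, ā) = (θ(ω), σ(ā)). -/
def tau {Ω 𝒜 : Type*} (θ : Ω → Ω) : Ω × (ℕ → 𝒜) → Ω × (ℕ → 𝒜) :=
  fun p => (θ p.1, shiftSeq p.2)

/-- The annealed quantum measure ℚ̄(Γ) = ∫_Ω ℚ_ω(Γ^ω) dℙ(ω). -/
noncomputable def annealed {Ω 𝒜 : Type*} [MeasurableSpace Ω] [MeasurableSpace 𝒜] (μ : Measure Ω)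
    (Q : Ω → Measure (ℕ → 𝒜)) (Γ : Set (Ω × (ℕ → 𝒜))) : ℝ≥0∞ :=
  ∫⁻ ω, Q ω {x | (ω, x) ∈ Γ} ∂μ

/-- T†_{a_1;θ(ω)} ∘ ⋯ ∘ T†_{a_n;θⁿ(ω)} applied to L, where T†_{a;ω}(L) = v_{a;ω}† L v_{a;ω}. -/
noncomputable def Tdagq {Ω 𝒜 : Type*} {d : ℕ} (v : Ω → 𝒜 → Matrix (Fin d) (Fin d) ℂ)
    (θ : Ω → Ω) : Ω → (n : ℕ) → (Fin n → 𝒜) →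
      Matrix (Fin d) (Fin d) ℂ → Matrix (Fin d) (Fin d) ℂ
  | _, 0, _, L => L
  | ω, n + 1, w, L =>
      (v (θ ω) (w 0))ᴴ * Tdagq v θ (θ ω) n (fun i => w i.succ) L * v (θ ω) (w 0)

section aux
variable {Ω 𝒜 : Type*} {d : ℕ} (v : Ω → 𝒜 → Matrix (Fin d) (Fin d) ℂ) (θ : Ω → Ω)

lemma Tdagq_conj : ∀ (n : ℕ) (ω : Ω) (w : Fin n → 𝒜),
    ∃ B : Matrix (Fin d) (Fin d) ℂ, ∀ L, Tdagq v θ ω n w L = Bᴴ * L * B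
  | 0, ω, w => ⟨1, fun L => by simp [Tdagq]⟩
  | n+1, ω, w => by
    obtain ⟨B, hB⟩ := Tdagq_conj (n) (θ ω) (fun i => w i.succ)
    refine ⟨B * v (θ ω) (w 0), fun L => ?_⟩
    simp only [Tdagq, hB, conjTranspose_mul, Matrix.mul_assoc]

lemma Tdagq_sub (n : ℕ) (ω : Ω) (w : Fin n → 𝒜) (L M : Matrix (Fin d) (Fin d) ℂ) :
    Tdagq v θ ω n w (L - M) = Tdagq v θ ω n w L - Tdagq v θ ω n w M := by
  obtain ⟨B, hB⟩ := Tdagq_conj v θ n ω w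
  simp [hB, Matrix.mul_sub, Matrix.sub_mul]

lemma Tdagq_snoc : ∀ (k : ℕ) (ω : Ω) (w : Fin (k+1) → 𝒜) (L : Matrix (Fin d) (Fin d) ℂ),
    Tdagq v θ ω (k+1) w L = Tdagq v θ ω k (fun i => w i.castSucc)
      ((v (θ^[k+1] ω) (w (Fin.last k)))ᴴ * L * v (θ^[k+1] ω) (w (Fin.last k)))
  | 0, ω, w, L => by
    have h0 : (Fin.last 0) = (0 : Fin (0+1)) := Fin.ext rfl
    simp [Tdagq, h0]
  | k+1, ω, w, L => by
    calc Tdagq v θ ω (k+1+1) w L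
        = (v (θ ω) (w 0))ᴴ * Tdagq v θ (θ ω) (k+1) (fun i => w i.succ) L * v (θ ω) (w 0) := rfl
      _ = (v (θ ω) (w 0))ᴴ *
            Tdagq v θ (θ ω) k (fun i => w (i.castSucc.succ))
              ((v (θ^[k+1] (θ ω)) (w (Fin.last k).succ))ᴴ * L *
                v (θ^[k+1] (θ ω)) (w (Fin.last k).succ)) * v (θ ω) (w 0) := by
          rw [Tdagq_snoc k (θ ω) (fun i => w i.succ) L]
      _ = Tdagq v θ ω (k+1) (fun i => w i.castSucc)
            ((v (θ^[k+1+1] ω) (w (Fin.last (k+1))))ᴴ * L *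
              v (θ^[k+1+1] ω) (w (Fin.last (k+1)))) := by
          simp only [Fin.succ_castSucc, Fin.succ_last, ← Function.iterate_succ_apply]
          rfl

lemma Tdagq_add : ∀ (m n : ℕ) (ω : Ω) (u : Fin (n+m) → 𝒜) (L : Matrix (Fin d) (Fin d) ℂ),
    Tdagq v θ ω (n+m) u L = Tdagq v θ ω n (fun i => u (Fin.castAdd m i))
      (Tdagq v θ (θ^[n] ω) m (fun j => u (Fin.natAdd n j)) L)
  | 0, n, ω, u, L => by
    have e : (fun i : Fin n => u (Fin.castAdd 0 i)) = u := funext fun i => congrArg u (Fin.ext rfl)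
    show Tdagq v θ ω n u L = Tdagq v θ ω n (fun i => u (Fin.castAdd 0 i)) L
    rw [e]
  | m+1, n, ω, u, L => by
    have hsnoc := Tdagq_snoc v θ (n+m) ω u L
    have e1 : (fun i : Fin n => u (Fin.castAdd m i).castSucc)
        = (fun i : Fin n => u (Fin.castAdd (m+1) i)) :=
      funext fun i => congrArg u (Fin.ext rfl)
    have e2 : (fun j : Fin m => u (Fin.natAdd n j).castSucc)
        = (fun j : Fin m => u (Fin.natAdd n j.castSucc)) :=
      funext fun j => congrArg u (Fin.ext rfl)
    have e3 : u (Fin.last (n+m)) = u (Fin.natAdd n (Fin.last m)) := congrArg u (Fin.ext rfl)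
    have e4 : θ^[n+m+1] ω = θ^[m+1] (θ^[n] ω) := by
      rw [← Function.iterate_add_apply]; congr 1; omega
    calc Tdagq v θ ω (n + (m+1)) u L
        = Tdagq v θ ω (n+m) (fun i => u i.castSucc)
            ((v (θ^[n+m+1] ω) (u (Fin.last (n+m))))ᴴ * L *
              v (θ^[n+m+1] ω) (u (Fin.last (n+m)))) := hsnoc
      _ = Tdagq v θ ω n (fun i => u (Fin.castAdd m i).castSucc)
            (Tdagq v θ (θ^[n] ω) m (fun j => u (Fin.natAdd n j).castSucc)
              ((v (θ^[n+m+1] ω) (u (Fin.last (n+m))))ᴴ * L *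
                v (θ^[n+m+1] ω) (u (Fin.last (n+m))))) :=
          Tdagq_add m n ω (fun i => u i.castSucc) _
      _ = Tdagq v θ ω n (fun i => u (Fin.castAdd (m+1) i))
            (Tdagq v θ (θ^[n] ω) m (fun j => u (Fin.natAdd n j.castSucc))
              ((v (θ^[m+1] (θ^[n] ω)) (u (Fin.natAdd n (Fin.last m))))ᴴ * L *
                v (θ^[m+1] (θ^[n] ω)) (u (Fin.natAdd n (Fin.last m))))) := by
          rw [e1, e2, e3, e4]
      _ = Tdagq v θ ω n (fun i => u (Fin.castAdd (m+1) i))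
            (Tdagq v θ (θ^[n] ω) (m+1) (fun j => u (Fin.natAdd n j)) L) := by
          rw [← Tdagq_snoc v θ m (θ^[n] ω) (fun j => u (Fin.natAdd n j)) L]

lemma cyl_disjoint {𝒜 : Type*} {m : ℕ} {w₁ w₂ : Fin m → 𝒜} (h : w₁ ≠ w₂) :
    Disjoint (cyl m w₁) (cyl m w₂) :=
  Set.disjoint_left.2 fun x hx₁ hx₂ => h (funext fun i => (hx₁ i).symm.trans (hx₂ i))

lemma cyl_measurable {𝒜 : Type*} [MeasurableSpace 𝒜] [MeasurableSingletonClass 𝒜]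
    (m : ℕ) (w : Fin m → 𝒜) : MeasurableSet (cyl m w) := by
  have : cyl m w = ⋂ i : Fin m, (fun x : ℕ → 𝒜 => x i) ⁻¹' {w i} := by
    ext x; simp [cyl]
  rw [this]
  exact MeasurableSet.iInter fun i => (measurable_pi_apply _) (measurableSet_singleton _)

end aux


/-- For any word (a_1,…,a_n) and measurable S,
Q*_ω(σ^{-n}(S) ∩ π_n⁻¹{(a_1,…,a_n)}) = T†_{a_1;θ(ω)} ∘ ⋯ ∘ T†_{a_n;θⁿ(ω)}(Q*_{θⁿ(ω)}(S))
for ℙ-a.e. ω. -/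
theorem stmt18 {Ω 𝒜 : Type*} {d : ℕ} [Fintype 𝒜] [MeasurableSpace 𝒜]
    [MeasurableSingletonClass 𝒜]
    [MeasurableSpace Ω] (μ : Measure Ω) [IsProbabilityMeasure μ]
    (θ θinv : Ω → Ω) (hθ : Ergodic θ μ)
    (hinvm : Measurable θinv) (hli : Function.LeftInverse θinv θ)
    (hri : Function.RightInverse θinv θ)
    (v : Ω → 𝒜 → Matrix (Fin d) (Fin d) ℂ)
    (hvmeas : ∀ a i j, Measurable fun ω => v ω a i j)
    (hv : ∀ᵐ ω ∂μ, ∑ a, (v ω a)ᴴ * v ω a = 1)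
    -- the matrix-valued quenched quantum measure Q*
    (Qstar : Ω → Set (ℕ → 𝒜) → Matrix (Fin d) (Fin d) ℂ)
    (hQscyl : ∀ n (w : Fin n → 𝒜), ∀ᵐ ω ∂μ, Qstar ω (cyl n w) = Tdagq v θ ω n w 1)
    (hQsadd : ∀ ω (f : ℕ → Set (ℕ → 𝒜)), (∀ k, MeasurableSet (f k)) →
      Pairwise (Function.onFun Disjoint f) →
      ∀ i j, HasSum (fun k => Qstar ω (f k) i j) (Qstar ω (⋃ k, f k) i j)) :
    ∀ S : Set (ℕ → 𝒜), MeasurableSet S → ∀ n (w : Fin n → 𝒜),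
      ∀ᵐ ω ∂μ,
        Qstar ω (((fun x (k : ℕ) => x (k + n)) ⁻¹' S) ∩ cyl n w)
          = Tdagq v θ ω n w (Qstar (θ^[n] ω) S) := by
  classical
  -- Q* of the empty set vanishes
  have qempty : ∀ ω', Qstar ω' (∅ : Set (ℕ → 𝒜)) = 0 := by
    intro ω'
    ext i j
    have h := hQsadd ω' (fun _ => ∅) (fun _ => MeasurableSet.empty)
      (fun a b hab => by simp [Function.onFun]) i j
    rw [Set.iUnion_empty] at h
    have ht : Tendsto (fun _ : ℕ => Qstar ω' ∅ i j) atTop (nhds 0) :=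
      h.summable.tendsto_atTop_zero
    simpa using tendsto_nhds_unique tendsto_const_nhds ht
  -- finite additivity for two disjoint measurable sets
  have addsplit : ∀ ω' (A B : Set (ℕ → 𝒜)), MeasurableSet A → MeasurableSet B → Disjoint A B →
      Qstar ω' (A ∪ B) = Qstar ω' A + Qstar ω' B := by
    intro ω' A B hA hB hAB
    ext i j
    set f : ℕ → Set (ℕ → 𝒜) := fun k => if k = 0 then A else if k = 1 then B else ∅ with hf
    have hm : ∀ k, MeasurableSet (f k) := by
      intro k; dsimp only [f]; split_ifs
      exacts [hA, hB, MeasurableSet.empty]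
    have hd : Pairwise (Function.onFun Disjoint f) := by
      intro a b hab
      dsimp only [Function.onFun, f]
      split_ifs with h1 h2 h2 h3 h4 <;>
        first
          | (exfalso; omega)
          | exact hAB
          | exact hAB.symm
          | exact Set.disjoint_empty _
          | exact Set.empty_disjoint _
    have hu : (⋃ k, f k) = A ∪ B := by
      ext x
      simp only [Set.mem_iUnion, Set.mem_union]
      constructor
      · rintro ⟨k, hk⟩
        rcases k with _ | _ | k
        · left; simpa [f] using hk
        · right; simpa [f] using hk
        · simp [f] at hk
      · rintro (h | h)
        · exact ⟨0, by simpa [f]⟩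
        · exact ⟨1, by simpa [f]⟩
    have h := hQsadd ω' f hm hd i j
    rw [hu] at h
    have h' : HasSum (fun k => Qstar ω' (f k) i j) (Qstar ω' A i j + Qstar ω' B i j) := by
      have hz : ∀ b ∉ ({0, 1} : Finset ℕ), Qstar ω' (f b) i j = 0 := by
        intro b hb
        simp only [Finset.mem_insert, Finset.mem_singleton, not_or] at hb
        have : f b = ∅ := by simp [f, hb.1, hb.2]
        rw [this, qempty]; simp
      have := hasSum_sum_of_ne_finset_zero (L := SummationFilter.unconditional ℕ) hz
      rwa [Finset.sum_pair (by norm_num : (0:ℕ) ≠ 1), show f 0 = A from by simp [f],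
        show f 1 = B from by simp [f]] at this
    have := h.unique h'
    simp [this]
  -- measurability facts
  intro S hS n w
  have hshift : Measurable (fun (x : ℕ → 𝒜) (k : ℕ) => x (k + n)) :=
    measurable_pi_lambda _ fun k => measurable_pi_apply _
  -- a.e. hypotheses
  have h1ae : ∀ᵐ ω ∂μ, ∀ (m : ℕ) (w' : Fin m → 𝒜), Qstar ω (cyl m w') = Tdagq v θ ω m w' 1 :=
    ae_all_iff.2 fun m => ae_all_iff.2 fun w' => hQscyl m w'
  have hqmp : Measure.QuasiMeasurePreserving (θ^[n]) μ μ :=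
    (hθ.toMeasurePreserving.iterate n).quasiMeasurePreserving
  have h2ae : ∀ᵐ ω ∂μ, ∀ (m : ℕ) (w' : Fin m → 𝒜),
      Qstar (θ^[n] ω) (cyl m w') = Tdagq v θ (θ^[n] ω) m w' 1 := hqmp.ae h1ae
  filter_upwards [h1ae, h2ae] with ω h1 h2
  -- pointwise argument by π-λ induction
  set C : Set (ℕ → 𝒜) → Prop := fun A =>
    Qstar ω (((fun x (k : ℕ) => x (k + n)) ⁻¹' A) ∩ cyl n w)
      = Tdagq v θ ω n w (Qstar (θ^[n] ω) A) with hC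
  obtain ⟨B, hB⟩ := Tdagq_conj v θ n ω w
  have hCempty : C ∅ := by
    show Qstar ω _ = _
    rw [Set.preimage_empty, Set.empty_inter, qempty, qempty, hB]
    simp
  have hCcyl : ∀ (m : ℕ) (w' : Fin m → 𝒜), C (cyl m w') := by
    intro m w'
    set u : Fin (n + m) → 𝒜 := fun i =>
      if h : (i : ℕ) < n then w ⟨i, h⟩ else w' ⟨(i : ℕ) - n, by have := i.isLt; omega⟩ with hu
    have K1 : ((fun x (k : ℕ) => x (k + n)) ⁻¹' cyl m w') ∩ cyl n w = cyl (n + m) u := by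
      ext x
      simp only [Set.mem_inter_iff, Set.mem_preimage, cyl, Set.mem_setOf_eq]
      constructor
      · rintro ⟨hsh, hw⟩ ⟨iv, hiv⟩
        show x iv = u ⟨iv, hiv⟩
        dsimp only [u]
        split_ifs with h
        · exact hw ⟨iv, h⟩
        · have h2' : x (iv - n + n) = w' ⟨iv - n, by omega⟩ := hsh ⟨iv - n, by omega⟩
          rw [show iv - n + n = iv from by omega] at h2'
          exact h2'
      · intro h
        constructor
        · intro j
          have hj : x ((j : ℕ) + n) = u ⟨(j : ℕ) + n, by have := j.isLt; omega⟩ :=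
            h ⟨(j : ℕ) + n, by have := j.isLt; omega⟩
          dsimp only [u] at hj
          rw [dif_neg (by omega)] at hj
          rw [hj]
          exact congrArg w' (Fin.ext (by simp))
        · intro i
          have hi : x (i : ℕ) = u ⟨(i : ℕ), by have := i.isLt; omega⟩ :=
            h ⟨(i : ℕ), by have := i.isLt; omega⟩
          dsimp only [u] at hi
          rw [dif_pos i.isLt] at hi
          rw [hi]
    have e1 : (fun i : Fin n => u (Fin.castAdd m i)) = w := by
      funext i
      dsimp only [u]
      rw [dif_pos (show ((Fin.castAdd m i : Fin (n+m)) : ℕ) < n by simp)]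
      exact congrArg w (Fin.ext rfl)
    have e2 : (fun j : Fin m => u (Fin.natAdd n j)) = w' := by
      funext j
      dsimp only [u]
      rw [dif_neg (by simp)]
      exact congrArg w' (Fin.ext (by simp))
    show Qstar ω _ = _
    calc Qstar ω (((fun x (k : ℕ) => x (k + n)) ⁻¹' cyl m w') ∩ cyl n w)
        = Qstar ω (cyl (n + m) u) := by rw [K1]
      _ = Tdagq v θ ω (n + m) u 1 := h1 (n + m) u
      _ = Tdagq v θ ω n (fun i => u (Fin.castAdd m i))
            (Tdagq v θ (θ^[n] ω) m (fun j => u (Fin.natAdd n j)) 1) := Tdagq_add v θ m n ω u 1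
      _ = Tdagq v θ ω n w (Tdagq v θ (θ^[n] ω) m w' 1) := by rw [e1, e2]
      _ = Tdagq v θ ω n w (Qstar (θ^[n] ω) (cyl m w')) := by rw [h2 m w']
  have hCunion : ∀ f : ℕ → Set (ℕ → 𝒜), Pairwise (Function.onFun Disjoint f) →
      (∀ k, MeasurableSet (f k)) → (∀ k, C (f k)) → C (⋃ k, f k) := by
    intro f hdisj hmeas hCk
    show Qstar ω _ = _
    ext i j
    set g : ℕ → Set (ℕ → 𝒜) := fun k => ((fun x (k : ℕ) => x (k + n)) ⁻¹' f k) ∩ cyl n w with hg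
    have hgm : ∀ k, MeasurableSet (g k) := fun k => (hshift (hmeas k)).inter (cyl_measurable n w)
    have hgd : Pairwise (Function.onFun Disjoint g) := fun a b hab =>
      (((hdisj hab).preimage _).mono Set.inter_subset_left Set.inter_subset_left)
    have hgu : (⋃ k, g k) = ((fun x (k : ℕ) => x (k + n)) ⁻¹' ⋃ k, f k) ∩ cyl n w := by
      rw [Set.preimage_iUnion, Set.iUnion_inter]
    have hL : HasSum (fun k => Qstar ω (g k) i j)
        (Qstar ω (((fun x (k : ℕ) => x (k + n)) ⁻¹' ⋃ k, f k) ∩ cyl n w) i j) := by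
      have := hQsadd ω g hgm hgd i j
      rwa [hgu] at this
    have key : ∀ A : Set (ℕ → 𝒜), (Tdagq v θ ω n w (Qstar (θ^[n] ω) A)) i j
        = ∑ q, ∑ p, Bᴴ i p * Qstar (θ^[n] ω) A p q * B q j := by
      intro A
      rw [hB]
      simp only [Matrix.mul_apply, Finset.sum_mul]
    have hR : HasSum (fun k => (Tdagq v θ ω n w (Qstar (θ^[n] ω) (f k))) i j)
        ((Tdagq v θ ω n w (Qstar (θ^[n] ω) (⋃ k, f k))) i j) := by
      have hs : HasSum (fun k => ∑ q, ∑ p, Bᴴ i p * Qstar (θ^[n] ω) (f k) p q * B q j)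
          (∑ q, ∑ p, Bᴴ i p * Qstar (θ^[n] ω) (⋃ k, f k) p q * B q j) :=
        hasSum_sum fun q _ => hasSum_sum fun p _ =>
          ((hQsadd (θ^[n] ω) f hmeas hdisj p q).mul_left _).mul_right _
      simpa only [key] using hs
    have hfun : (fun k => Qstar ω (g k) i j)
        = fun k => (Tdagq v θ ω n w (Qstar (θ^[n] ω) (f k))) i j := by
      funext k
      rw [show Qstar ω (g k) = Tdagq v θ ω n w (Qstar (θ^[n] ω) (f k)) from hCk k]
    rw [hfun] at hL
    exact hL.unique hR
  have hCcompl : ∀ t : Set (ℕ → 𝒜), MeasurableSet t → C t → C tᶜ := by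
    intro t ht hCt
    have huniv : (Set.univ : Set (ℕ → 𝒜)) = cyl 0 (fun i => i.elim0) := by
      ext x
      constructor
      · intro _ i; exact i.elim0
      · intro _; trivial
    have hu2 : Qstar (θ^[n] ω) Set.univ = 1 := by
      rw [huniv]; exact h2 0 _
    have hdisj2 : Disjoint (((fun x (k : ℕ) => x (k + n)) ⁻¹' t) ∩ cyl n w)
        (((fun x (k : ℕ) => x (k + n)) ⁻¹' tᶜ) ∩ cyl n w) := by
      refine Disjoint.mono Set.inter_subset_left Set.inter_subset_left ?_
      rw [Set.preimage_compl]
      exact disjoint_compl_right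
    have hcup : (((fun x (k : ℕ) => x (k + n)) ⁻¹' t) ∩ cyl n w)
        ∪ (((fun x (k : ℕ) => x (k + n)) ⁻¹' tᶜ) ∩ cyl n w) = cyl n w := by
      rw [← Set.union_inter_distrib_right, Set.preimage_compl, Set.union_compl_self,
        Set.univ_inter]
    have hA := addsplit ω _ _ ((hshift ht).inter (cyl_measurable n w))
      ((hshift ht.compl).inter (cyl_measurable n w)) hdisj2
    rw [hcup] at hA
    have hA2 := addsplit (θ^[n] ω) t tᶜ ht ht.compl disjoint_compl_right
    rw [Set.union_compl_self] at hA2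
    have h3 : Qstar (θ^[n] ω) tᶜ = Qstar (θ^[n] ω) Set.univ - Qstar (θ^[n] ω) t := by
      rw [hA2]; abel
    show Qstar ω _ = _
    rw [h3, hu2, Tdagq_sub]
    rw [← h1 n w, ← hCt]
    rw [hA]
    abel
  have hbasic : ∀ Γ ∈ measurableCylinders (fun _ : ℕ => 𝒜), C Γ := by
    intro Γ hΓ
    obtain ⟨s, S0, hS0, rfl⟩ := (mem_measurableCylinders Γ).1 hΓ
    set m := s.sup id + 1 with hm
    have hms : ∀ i ∈ s, i < m := fun i hi => Nat.lt_succ_of_le (Finset.le_sup (f := id) hi)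
    set e : Fin (Fintype.card (Fin m → 𝒜)) ≃ (Fin m → 𝒜) := (Fintype.equivFin (Fin m → 𝒜)).symm
      with he
    set compat : (Fin m → 𝒜) → Prop :=
      fun w' => (fun i : s => w' ⟨i.1, hms i.1 i.2⟩) ∈ S0 with hcompat
    set f : ℕ → Set (ℕ → 𝒜) := fun k =>
      if h : k < Fintype.card (Fin m → 𝒜) then
        (if compat (e ⟨k, h⟩) then cyl m (e ⟨k, h⟩) else ∅) else ∅ with hfdef
    have hfm : ∀ k, MeasurableSet (f k) := by
      intro k; dsimp only [f]; split_ifs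
      exacts [cyl_measurable _ _, MeasurableSet.empty, MeasurableSet.empty]
    have hfd : Pairwise (Function.onFun Disjoint f) := by
      intro a b hab
      dsimp only [Function.onFun, f]
      split_ifs with h1 h2 h3 h4 <;>
        first
          | exact Set.disjoint_empty _
          | exact Set.empty_disjoint _
          | skip
      exact cyl_disjoint fun hww =>
        hab (by simpa using congrArg (fun z => ((e.symm z : Fin _) : ℕ)) hww)
    have hfu : (⋃ k, f k) = cylinder s S0 := by
      ext x
      simp only [Set.mem_iUnion]
      constructor
      · rintro ⟨k, hk⟩
        dsimp only [f] at hk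
        split_ifs at hk with h1 h2
        · rw [mem_cylinder]
          have hx : s.restrict x = fun i : s => (e ⟨k, h1⟩) ⟨i.1, hms i.1 i.2⟩ :=
            funext fun i => hk ⟨i.1, hms i.1 i.2⟩
          rw [hx]
          exact h2
        · exact absurd hk (Set.notMem_empty x)
        · exact absurd hk (Set.notMem_empty x)
      · intro hx
        refine ⟨(e.symm (fun i : Fin m => x i)).1, ?_⟩
        dsimp only [f]
        rw [dif_pos (e.symm (fun i : Fin m => x i)).isLt]
        have hee : e ⟨(e.symm (fun i : Fin m => x i)).1,
            (e.symm (fun i : Fin m => x i)).isLt⟩ = fun i : Fin m => x i := by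
          rw [Fin.eta, Equiv.apply_symm_apply]
        rw [hee]
        rw [if_pos (by exact hx)]
        intro i
        rfl
    have hCk : ∀ k, C (f k) := by
      intro k
      dsimp only [f]
      split_ifs
      exacts [hCcyl _ _, hCempty, hCempty]
    have := hCunion f hfd hfm hCk
    rwa [hfu] at this
  exact MeasurableSpace.induction_on_inter (C := fun t _ => C t) generateFrom_measurableCylinders.symm
    isPiSystem_measurableCylinders hCempty hbasic hCcompl hCunion S hS
end
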